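/- arXiv:2310.01394 — 2 statements merged into one kernel-verified Lean document; each statement's English description precedes it below -/
import Mathlib

section
/- Let r ≥ 2 and let M = {e_1, …, e_m} be an ordered r-matching for which there exists a threshold h such that each edge e_i has exactly r−1 vertices at most h (forming the set e_i*) and exactly one vertex v_i greater than h, and such that {e_1*, …, e_m*}, with e_1* < ⋯ < e_m*, is a P-clique for some (r−1)-pattern P. If the sequence (v_1, …, v_m) contains two order-isomorphic subsequences occupying disjoint index sets, each of length t, then M contains twins of size t. In particular, t(M) ≥ τ(m). -/
/-- A (sub-)matching: a finite set of pairwise disjoint `r`-element subsets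
("edges") of the linearly ordered vertex set `ℕ`. -/
def IsMatching (r : ℕ) (M : Finset (Finset ℕ)) : Prop :=
  (∀ e ∈ M, e.card = r) ∧ ∀ e ∈ M, ∀ f ∈ M, e ≠ f → Disjoint e f

/-- The vertex support of a matching: the union of its edges. -/
def mSupport (M : Finset (Finset ℕ)) : Finset ℕ := M.sup id

/-- An ordered `r`-matching of size `n`: `n` pairwise disjoint `r`-element edges
partitioning `[rn] = {1, …, rn}`. -/
def IsOrderedMatching (r n : ℕ) (M : Finset (Finset ℕ)) : Prop :=
  IsMatching r M ∧ M.card = n ∧ mSupport M = Finset.Icc 1 (r * n)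

/-- Two ordered matchings are isomorphic if some (equivalently, the unique)
order-preserving bijection between their vertex supports maps edges onto edges. -/
def MatchIso (M N : Finset (Finset ℕ)) : Prop :=
  ∃ f : ℕ → ℕ, Set.BijOn f (mSupport M : Set ℕ) (mSupport N : Set ℕ) ∧
    (∀ x ∈ mSupport M, ∀ y ∈ mSupport M, x < y → f x < f y) ∧
    N = M.image fun e => e.image f

/-- `M` contains twins of size `k`: a pair of vertex-disjoint isomorphic
sub-matchings of `M`, each with `k` edges. -/
def HasTwins (M : Finset (Finset ℕ)) (k : ℕ) : Prop :=
  ∃ M₁ M₂ : Finset (Finset ℕ), M₁ ⊆ M ∧ M₂ ⊆ M ∧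
    Disjoint (mSupport M₁) (mSupport M₂) ∧ MatchIso M₁ M₂ ∧
    M₁.card = k ∧ M₂.card = k

/-- `t(M)`: the maximum size of twins in `M`. -/
noncomputable def twinMax (M : Finset (Finset ℕ)) : ℕ := sSup {k | HasTwins M k}

/-- `t^(r)(n)`: the minimum of `t(M)` over all ordered `r`-matchings of size `n`. -/
noncomputable def minTwins (r n : ℕ) : ℕ :=
  sInf {t | ∃ M, IsOrderedMatching r n M ∧ twinMax M = t}

/-- A permutation `π` of `[n]` has twins of length `k`: two order-isomorphic
subsequences occupying disjoint sets of positions. -/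
def PermTwins {n : ℕ} (π : Equiv.Perm (Fin n)) (k : ℕ) : Prop :=
  ∃ a b : Fin k → Fin n, StrictMono a ∧ StrictMono b ∧
    (∀ i j, a i ≠ b j) ∧ ∀ i j, (π (a i) < π (a j) ↔ π (b i) < π (b j))

/-- `τ(n)`: the largest `k` such that every permutation of `[n]` has twins of length `k`. -/
noncomputable def permTau (n : ℕ) : ℕ :=
  sSup {k | ∀ π : Equiv.Perm (Fin n), PermTwins π k}

/-- An `r`-pattern, represented by its canonical representative: an ordered
`r`-matching of size `2` (on the vertex set `[2r]`). Every isomorphism class of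
ordered `r`-matchings of size `2` contains exactly one such representative. -/
def IsPattern (r : ℕ) (P : Finset (Finset ℕ)) : Prop := IsOrderedMatching r 2 P

/-- A `P`-clique: a matching all of whose pairs of (distinct) edges form the pattern `P`. -/
def IsPClique (P M : Finset (Finset ℕ)) : Prop :=
  ∀ e ∈ M, ∀ f ∈ M, e ≠ f → MatchIso {e, f} P

/-- `L(M)`: the size of the largest sub-matching of `M` that is a `P`-clique,
over all `r`-patterns `P`. -/
noncomputable def cliqueMax (r : ℕ) (M : Finset (Finset ℕ)) : ℕ :=
  sSup {k | ∃ P, IsPattern r P ∧ ∃ M' ⊆ M, IsPClique P M' ∧ M'.card = k}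

/-- `L_r(n)`: the minimum of `L(M)` over all ordered `r`-matchings of size `n`. -/
noncomputable def minClique (r n : ℕ) : ℕ :=
  sInf {l | ∃ M, IsOrderedMatching r n M ∧ cliqueMax r M = l}

open Finset

/-- rank of `x` in `S`: number of elements of `S` below `x`. -/
def rk (S : Finset ℕ) (x : ℕ) : ℕ := (S.filter (· < x)).card

lemma rk_lt_rk {S : Finset ℕ} {x y : ℕ} (hx : x ∈ S) (hxy : x < y) :
    rk S x < rk S y := by
  apply card_lt_card
  constructor
  · intro z hz
    simp only [mem_filter] at hz ⊢
    exact ⟨hz.1, hz.2.trans hxy⟩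
  · intro hsub
    have := hsub (by simp [mem_filter, hx, hxy] : x ∈ S.filter (· < y))
    simp [mem_filter] at this

lemma rk_injOn {S : Finset ℕ} {x y : ℕ} (hx : x ∈ S) (hy : y ∈ S)
    (h : rk S x = rk S y) : x = y := by
  rcases lt_trichotomy x y with h'|h'|h'
  · exact absurd h (Nat.ne_of_lt (rk_lt_rk hx h'))
  · exact h'
  · exact absurd h.symm (Nat.ne_of_lt (rk_lt_rk hy h'))

lemma monoOn_le {g : ℕ → ℕ} {S : Finset ℕ}
    (hg : ∀ y ∈ S, ∀ z ∈ S, y < z → g y < g z) :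
    ∀ y ∈ S, ∀ z ∈ S, y ≤ z → g y ≤ g z := by
  intro y hy z hz hyz
  rcases eq_or_lt_of_le hyz with rfl|h
  · exact le_refl _
  · exact (hg y hy z hz h).le

lemma rk_image {g : ℕ → ℕ} {S A : Finset ℕ} (hA : A ⊆ S)
    (hg : ∀ y ∈ S, ∀ z ∈ S, y < z → g y < g z) {x : ℕ} (hx : x ∈ S) :
    rk (A.image g) (g x) = rk A x := by
  have himg : (A.image g).filter (· < g x) = (A.filter (· < x)).image g := by
    ext z
    simp only [mem_filter, mem_image]
    constructor
    · rintro ⟨⟨y, hyA, rfl⟩, hlt⟩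
      refine ⟨y, ⟨hyA, ?_⟩, rfl⟩
      by_contra hxy
      push_neg at hxy
      have := monoOn_le hg x hx y (hA hyA) hxy
      omega
    · rintro ⟨y, ⟨hyA, hyx⟩, rfl⟩
      exact ⟨⟨y, hyA, rfl⟩, hg y (hA hyA) x hx hyx⟩
  have hinj : Set.InjOn g A := by
    intro y hy z hz hyz
    by_contra hne
    rcases lt_or_gt_of_ne hne with h'|h'
    · have := hg y (hA hy) z (hA hz) h'; omega
    · have := hg z (hA hz) y (hA hy) h'; omega
  rw [rk, himg, card_image_of_injOn (hinj.mono (by intro z hz; exact (mem_filter.mp hz).1))]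
  rfl

lemma rk_orderIsoOfFin {B : Finset ℕ} {n : ℕ} (hB : B.card = n) (k : Fin n) :
    rk B ((B.orderIsoOfFin hB) k : ℕ) = k := by
  have himg : B.filter (· < ((B.orderIsoOfFin hB) k : ℕ)) =
      (Finset.univ.filter (fun j : Fin n => j < k)).image
        (fun j => ((B.orderIsoOfFin hB) j : ℕ)) := by
    ext z
    simp only [mem_filter, mem_image, mem_univ, true_and]
    constructor
    · rintro ⟨hzB, hlt⟩
      refine ⟨(B.orderIsoOfFin hB).symm ⟨z, hzB⟩, ?_, by simp⟩
      rw [← (B.orderIsoOfFin hB).lt_iff_lt, OrderIso.apply_symm_apply]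
      exact hlt
    · rintro ⟨j, hjk, rfl⟩
      refine ⟨((B.orderIsoOfFin hB) j).2, ?_⟩
      exact_mod_cast (B.orderIsoOfFin hB).lt_iff_lt.mpr hjk
  rw [rk, himg, card_image_of_injOn]
  · have : Finset.univ.filter (fun j : Fin n => j < k) = Finset.Iio k := by
      ext j; simp
    rw [this, Fin.card_Iio]
  · intro y _ z _ hyz
    have : (B.orderIsoOfFin hB) y = (B.orderIsoOfFin hB) z := Subtype.ext hyz
    exact (B.orderIsoOfFin hB).injective this

lemma rk_lt_card {B : Finset ℕ} {y : ℕ} (hy : y ∈ B) : rk B y < B.card := by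
  apply card_lt_card
  constructor
  · exact filter_subset _ _
  · intro hsub
    have := hsub hy
    simp [mem_filter] at this

lemma orderIsoOfFin_rk {B : Finset ℕ} {n : ℕ} (hB : B.card = n) {y : ℕ} (hy : y ∈ B) :
    ((B.orderIsoOfFin hB) ⟨rk B y, hB ▸ rk_lt_card hy⟩ : ℕ) = y := by
  apply rk_injOn (((B.orderIsoOfFin hB) _).2) hy
  rw [rk_orderIsoOfFin]

lemma mSupport_pair (A B : Finset ℕ) : mSupport {A, B} = A ∪ B := by
  simp [mSupport, Finset.sup_insert, Finset.sup_singleton]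

lemma mSupport_image {α : Type*} [Fintype α] (g : α → Finset ℕ) :
    mSupport (Finset.image g Finset.univ) = Finset.univ.biUnion g := by
  rw [mSupport, sup_image, sup_eq_biUnion]
  rfl

lemma mem_mSupport_image {α : Type*} [Fintype α] {g : α → Finset ℕ} {x : ℕ} :
    x ∈ mSupport (Finset.image g Finset.univ) ↔ ∃ i, x ∈ g i := by
  rw [mSupport_image]; simp

lemma min'_image {g : ℕ → ℕ} {S A : Finset ℕ} (hA : A ⊆ S) (hAne : A.Nonempty)
    (hg : ∀ y ∈ S, ∀ z ∈ S, y < z → g y < g z) :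
    (A.image g).min' (hAne.image g) = g (A.min' hAne) := by
  apply le_antisymm
  · exact min'_le _ _ (mem_image_of_mem g (A.min'_mem hAne))
  · obtain ⟨y, hy, hyeq⟩ := mem_image.mp ((A.image g).min'_mem (hAne.image g))
    rw [← hyeq]
    exact monoOn_le hg _ (hA (A.min'_mem hAne)) _ (hA hy) (min'_le _ _ hy)

/-- key pattern-transfer step -/
lemma pairstep {A B C D : Finset ℕ} {P : Finset (Finset ℕ)}
    (hA : A.Nonempty) (hB : B.Nonempty) (hC : C.Nonempty) (hD : D.Nonempty)
    (hAB : MatchIso {A, B} P) (hCD : MatchIso {C, D} P)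
    (hminAB : A.min' hA ≠ B.min' hB) (hminCD : C.min' hC ≠ D.min' hD)
    (hiff : (A.min' hA < B.min' hB ↔ C.min' hC < D.min' hD))
    {x x' : ℕ} (hx : x ∈ A) (hx' : x' ∈ C) (hrk : rk A x = rk C x') :
    rk B x = rk D x' := by
  obtain ⟨g₁, hbij₁, hmono₁, hPeq₁⟩ := hAB
  obtain ⟨g₂, hbij₂, hmono₂, hPeq₂⟩ := hCD
  rw [mSupport_pair] at hbij₁ hmono₁ hbij₂ hmono₂
  -- the two edge-pair images coincide
  have hpair : ({A.image g₁, B.image g₁} : Finset (Finset ℕ)) =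
      {C.image g₂, D.image g₂} := by
    have h1 : P = {A.image g₁, B.image g₁} := by
      rw [hPeq₁, image_insert, image_singleton]
    have h2 : P = {C.image g₂, D.image g₂} := by
      rw [hPeq₂, image_insert, image_singleton]
    rw [← h1, ← h2]
  have hgAB : g₁ (A.min' hA) ≠ g₁ (B.min' hB) := by
    rcases hminAB.lt_or_gt with h'|h'
    · exact (hmono₁ _ (mem_union_left _ (A.min'_mem hA)) _
        (mem_union_right _ (B.min'_mem hB)) h').ne
    · exact (hmono₁ _ (mem_union_right _ (B.min'_mem hB)) _
        (mem_union_left _ (A.min'_mem hA)) h').ne'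
  have hgC : g₂ (C.min' hC) < g₂ (D.min' hD) ↔ C.min' hC < D.min' hD := by
    constructor
    · intro h'
      by_contra h''
      push_neg at h''
      have := monoOn_le hmono₂ _ (mem_union_right _ (D.min'_mem hD)) _
        (mem_union_left _ (C.min'_mem hC)) h''
      omega
    · intro h'
      exact hmono₂ _ (mem_union_left _ (C.min'_mem hC)) _
        (mem_union_right _ (D.min'_mem hD)) h'
  have hmA := min'_image (subset_union_left (s₂ := B)) hA hmono₁
  have hmB := min'_image (subset_union_right (s₁ := A)) hB hmono₁
  have hmC := min'_image (subset_union_left (s₂ := D)) hC hmono₂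
  have hmD := min'_image (subset_union_right (s₁ := C)) hD hmono₂
  have min'_eq_of_eq : ∀ {X Y : Finset ℕ} (hX : X.Nonempty) (hY : Y.Nonempty),
      X = Y → X.min' hX = Y.min' hY := by
    rintro X Y hX hY rfl; rfl
  have hABne : A.image g₁ ≠ B.image g₁ := by
    intro hcon
    exact hgAB (by rw [← hmA, ← hmB,
      min'_eq_of_eq (hA.image g₁) (hB.image g₁) hcon])
  have hcross : ¬ (A.image g₁ = D.image g₂ ∧ B.image g₁ = C.image g₂) := by
    rintro ⟨hAD, hBC⟩
    have eAD : g₁ (A.min' hA) = g₂ (D.min' hD) := by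
      rw [← hmA, ← hmD, min'_eq_of_eq (hA.image g₁) (hD.image g₂) hAD]
    have eBC : g₁ (B.min' hB) = g₂ (C.min' hC) := by
      rw [← hmB, ← hmC, min'_eq_of_eq (hB.image g₁) (hC.image g₂) hBC]
    rcases hminAB.lt_or_gt with h'|h'
    · have h1 := hmono₁ _ (mem_union_left _ (A.min'_mem hA)) _
        (mem_union_right _ (B.min'_mem hB)) h'
      have h2 := hgC.mpr (hiff.mp h')
      omega
    · have h1 := hmono₁ _ (mem_union_right _ (B.min'_mem hB)) _
        (mem_union_left _ (A.min'_mem hA)) h'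
      have h3 : D.min' hD < C.min' hC := by
        rcases hminCD.lt_or_gt with h''|h''
        · exact absurd (hiff.mpr h'') (by omega)
        · exact h''
      have h2 : g₂ (D.min' hD) < g₂ (C.min' hC) := by
        by_contra h''
        push_neg at h''
        have := hgC.mp (lt_of_le_of_lt h'' (by
          by_contra h3'
          push_neg at h3'
          have := monoOn_le hmono₂ _ (mem_union_left _ (C.min'_mem hC)) _
            (mem_union_right _ (D.min'_mem hD)) (le_of_not_gt (by omega))
          omega))
        omega
      omega
  have key : A.image g₁ = C.image g₂ ∧ B.image g₁ = D.image g₂ := by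
    have hmemA : A.image g₁ ∈ ({C.image g₂, D.image g₂} : Finset (Finset ℕ)) := by
      rw [← hpair]; exact mem_insert_self _ _
    have hmemB : B.image g₁ ∈ ({C.image g₂, D.image g₂} : Finset (Finset ℕ)) := by
      rw [← hpair]; exact mem_insert_of_mem (mem_singleton_self _)
    rcases mem_insert.mp hmemA with hAC | hAD
    · rcases mem_insert.mp hmemB with hBC | hBD
      · exact absurd (hAC.trans hBC.symm) hABne
      · exact ⟨hAC, mem_singleton.mp hBD⟩
    · replace hAD := mem_singleton.mp hAD
      rcases mem_insert.mp hmemB with hBC | hBD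
      · exact absurd ⟨hAD, hBC⟩ hcross
      · exact absurd (hAD.trans (mem_singleton.mp hBD).symm) hABne
  have e1 : rk (A.image g₁) (g₁ x) = rk A x :=
    rk_image subset_union_left hmono₁ (mem_union_left _ hx)
  have e2 : rk (C.image g₂) (g₂ x') = rk C x' :=
    rk_image subset_union_left hmono₂ (mem_union_left _ hx')
  have e3 : rk (B.image g₁) (g₁ x) = rk B x :=
    rk_image subset_union_right hmono₁ (mem_union_left _ hx)
  have e4 : rk (D.image g₂) (g₂ x') = rk D x' :=
    rk_image subset_union_right hmono₂ (mem_union_left _ hx')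
  have hgg : g₁ x = g₂ x' := by
    apply rk_injOn (S := A.image g₁) (mem_image_of_mem _ hx)
    · rw [key.1]; exact mem_image_of_mem _ hx'
    · rw [e1, key.1, e2, hrk]
  calc rk B x = rk (B.image g₁) (g₁ x) := e3.symm
    _ = rk (D.image g₂) (g₂ x') := by rw [key.2, hgg]
    _ = rk D x' := e4

lemma exists_mono_bij (S T : Finset ℕ) (hc : S.card = T.card) :
    ∃ f : ℕ → ℕ, Set.BijOn f ↑S ↑T ∧
      (∀ x ∈ S, ∀ y ∈ S, x < y → f x < f y) ∧ S.image f = T := by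
  classical
  let eS := S.orderIsoOfFin hc
  let eT := T.orderIsoOfFin rfl
  set f : ℕ → ℕ := fun x => if hx : x ∈ S then (eT (eS.symm ⟨x, hx⟩) : ℕ) else 0 with hf
  have hmono : ∀ x ∈ S, ∀ y ∈ S, x < y → f x < f y := by
    intro x hx y hy hxy
    simp only [hf, dif_pos hx, dif_pos hy]
    have h1 : (⟨x, hx⟩ : {z // z ∈ S}) < ⟨y, hy⟩ := Subtype.mk_lt_mk.mpr hxy
    exact Subtype.coe_lt_coe.mpr ((eT.lt_iff_lt).mpr ((eS.symm.lt_iff_lt).mpr h1))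
  have hinj : Set.InjOn f ↑S := by
    intro x hx y hy hxy
    simp only [Finset.mem_coe] at hx hy
    by_contra hne
    rcases lt_or_gt_of_ne hne with h'|h'
    · exact absurd hxy (hmono x hx y hy h').ne
    · exact absurd hxy (hmono y hy x hx h').ne'
  have himg : S.image f = T := by
    apply eq_of_subset_of_card_le
    · intro z hz
      obtain ⟨x, hx, rfl⟩ := mem_image.mp hz
      simp only [hf, dif_pos hx]
      exact (eT (eS.symm ⟨x, hx⟩)).2
    · rw [card_image_of_injOn hinj, hc]
  refine ⟨f, ⟨?_, hinj, ?_⟩, hmono, himg⟩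
  · intro x hx
    have : f x ∈ S.image f := mem_image_of_mem f hx
    rw [himg] at this
    exact this
  · intro z hz
    have : z ∈ S.image f := himg ▸ hz
    obtain ⟨x, hx, rfl⟩ := mem_image.mp this
    exact ⟨x, hx, rfl⟩
/-- Subcase 2a of the proof of Lemma 3.2. Let `M = {e_1,…,e_m}`
be an ordered `r`-matching such that each edge has exactly `r-1` vertices `≤ h`
(the prefix `e_i*`) and exactly one vertex `v_i > h`, the prefixes (listed in
increasing order) forming a `P`-clique for some `(r-1)`-pattern `P`. If the
sequence `(v_1,…,v_m)` has two order-isomorphic subsequences on disjoint index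
sets, each of length `t`, then `M` has twins of size `t`; in particular
`t(M) ≥ τ(m)`. -/
theorem twins_from_clique_prefix_and_permutation (r m : ℕ) (hr : 2 ≤ r)
    (e : Fin m → Finset ℕ) (h : ℕ)
    (hcard : ∀ i, (e i).card = r)
    (hdisj : ∀ i j, i ≠ j → Disjoint (e i) (e j))
    (hpre : ∀ i, ((e i).filter (· ≤ h)).card = r - 1)
    (v : Fin m → ℕ) (hv : ∀ i, v i ∈ e i ∧ h < v i)
    (hord : StrictMono fun i => ((e i).filter (· ≤ h)).min)
    (P : Finset (Finset ℕ)) (hP : IsPattern (r - 1) P)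
    (hclique : IsPClique P (Finset.image (fun i => (e i).filter (· ≤ h)) Finset.univ)) :
    (∀ t : ℕ, ∀ a b : Fin t → Fin m, StrictMono a → StrictMono b →
      (∀ i j, a i ≠ b j) →
      (∀ i j, v (a i) < v (a j) ↔ v (b i) < v (b j)) →
      HasTwins (Finset.image e Finset.univ) t) ∧
    permTau m ≤ twinMax (Finset.image e Finset.univ) := by
  classical
  set p : Fin m → Finset ℕ := fun i => (e i).filter (· ≤ h) with hpdef
  have hpcard : ∀ i, (p i).card = r - 1 := hpre
  have hpne : ∀ i, (p i).Nonempty := fun i => card_pos.mp (by rw [hpcard]; omega)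
  have hene : ∀ i, (e i).Nonempty := fun i => card_pos.mp (by rw [hcard]; omega)
  have hvmem : ∀ i, v i ∈ e i := fun i => (hv i).1
  have hvh : ∀ i, h < v i := fun i => (hv i).2
  have hene' : ∀ i j, i ≠ j → e i ≠ e j := by
    intro i j hij hcon
    have := hdisj i j hij
    rw [hcon, disjoint_self] at this
    exact absurd (this ▸ hvmem j) (notMem_empty _)
  have hvinj : ∀ i j, i ≠ j → v i ≠ v j := by
    intro i j hij hcon
    exact (Finset.disjoint_left.mp (hdisj i j hij)) (hvmem i) (hcon ▸ hvmem j)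
  have hpsub : ∀ i, p i ⊆ e i := fun i => filter_subset _ _
  have hpd : ∀ i j, i ≠ j → Disjoint (p i) (p j) :=
    fun i j hij => (hdisj i j hij).mono (hpsub i) (hpsub j)
  have hpinj : ∀ i j, i ≠ j → p i ≠ p j := by
    intro i j hij hcon
    have := hpd i j hij
    rw [hcon, disjoint_self] at this
    obtain ⟨x, hx⟩ := hpne j
    rw [this] at hx
    exact absurd hx (notMem_empty _)
  have hvnp : ∀ i, v i ∉ p i := by
    intro i hcon
    have := (mem_filter.mp hcon).2
    have := hvh i
    omega
  have hedecomp : ∀ i, e i = p i ∪ {v i} := by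
    intro i
    have hsplit := filter_union_filter_not_eq (p := (· ≤ h)) (e i)
    have hcne : ((e i).filter (fun z => ¬ z ≤ h)).card = 1 := by
      have := card_filter_add_card_filter_not (s := e i) (p := (· ≤ h))
      rw [hcard i, hpre i] at this
      omega
    obtain ⟨c, hc⟩ := card_eq_one.mp hcne
    have hvc : v i = c := by
      have : v i ∈ (e i).filter (fun z => ¬ z ≤ h) :=
        mem_filter.mpr ⟨hvmem i, by have := hvh i; omega⟩
      rw [hc] at this
      exact mem_singleton.mp this
    rw [← hsplit, hc, hvc]
  have hmin : ∀ i j, i < j → (p i).min' (hpne i) < (p j).min' (hpne j) := by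
    intro i j hij
    have := hord hij
    simp only at this
    rw [← Finset.coe_min' (hpne i), ← Finset.coe_min' (hpne j)] at this
    exact_mod_cast this
  have main : ∀ t : ℕ, ∀ a b : Fin t → Fin m, StrictMono a → StrictMono b →
      (∀ i j, a i ≠ b j) →
      (∀ i j, v (a i) < v (a j) ↔ v (b i) < v (b j)) →
      HasTwins (Finset.image e Finset.univ) t := by
    intro t a b ha hb hab hiso
    have hane : ∀ i j : Fin t, i ≠ j → a i ≠ a j := fun i j hij hc => hij (ha.injective hc)
    have hbne : ∀ i j : Fin t, i ≠ j → b i ≠ b j := fun i j hij hc => hij (hb.injective hc)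
    set S := Finset.univ.biUnion (fun i : Fin t => e (a i)) with hSdef
    set T := Finset.univ.biUnion (fun i : Fin t => e (b i)) with hTdef
    have hdS : ∀ i j : Fin t, i ≠ j → Disjoint (e (a i)) (e (a j)) :=
      fun i j hij => hdisj _ _ (hane i j hij)
    have hdT : ∀ i j : Fin t, i ≠ j → Disjoint (e (b i)) (e (b j)) :=
      fun i j hij => hdisj _ _ (hbne i j hij)
    have hScard : S.card = t * r := by
      rw [hSdef, card_biUnion (fun i _ j _ hij => hdS i j hij)]
      simp [hcard, mul_comm]
    have hTcard : T.card = t * r := by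
      rw [hTdef, card_biUnion (fun i _ j _ hij => hdT i j hij)]
      simp [hcard, mul_comm]
    obtain ⟨f, hbij, hmono, himg⟩ := exists_mono_bij S T (by rw [hScard, hTcard])
    have heS : ∀ i, e (a i) ⊆ S := fun i => by
      rw [hSdef]; exact subset_biUnion_of_mem (fun i => e (a i)) (mem_univ i)
    have heT : ∀ i, e (b i) ⊆ T := fun i => by
      rw [hTdef]; exact subset_biUnion_of_mem (fun i => e (b i)) (mem_univ i)
    have hApS : ∀ i, p (a i) ⊆ S := fun i => (hpsub (a i)).trans (heS i)
    have hBpT : ∀ i, p (b i) ⊆ T := fun i => (hpsub (b i)).trans (heT i)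
    have hfchar : ∀ x ∈ S, ∀ y ∈ T, rk S x = rk T y → f x = y := by
      intro x hx y hy hrkeq
      have h1 : rk (S.image f) (f x) = rk S x := rk_image (subset_refl S) hmono hx
      rw [himg] at h1
      exact rk_injOn (by rw [← himg]; exact mem_image_of_mem f hx) hy (h1.trans hrkeq)
    have hrkS : ∀ x ≤ h, rk S x = ∑ j, rk (p (a j)) x := by
      intro x hx
      rw [rk, hSdef, filter_biUnion,
        card_biUnion (fun i _ j _ hij => disjoint_filter_filter (hdS i j hij))]
      apply Finset.sum_congr rfl
      intro j _
      show ((e (a j)).filter (· < x)).card = rk (p (a j)) x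
      rw [rk, hpdef, filter_filter]
      congr 1
      apply filter_congr
      intro z _
      constructor
      · intro hz; exact ⟨by omega, hz⟩
      · intro hz; exact hz.2
    have hrkT : ∀ x ≤ h, rk T x = ∑ j, rk (p (b j)) x := by
      intro x hx
      rw [rk, hTdef, filter_biUnion,
        card_biUnion (fun i _ j _ hij => disjoint_filter_filter (hdT i j hij))]
      apply Finset.sum_congr rfl
      intro j _
      show ((e (b j)).filter (· < x)).card = rk (p (b j)) x
      rw [rk, hpdef, filter_filter]
      congr 1
      apply filter_congr
      intro z _
      constructor
      · intro hz; exact ⟨by omega, hz⟩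
      · intro hz; exact hz.2
    have hfA : ∀ (i : Fin t), ∀ x ∈ p (a i), f x ∈ p (b i) ∧ rk (p (b i)) (f x) = rk (p (a i)) x := by
      intro i x hxA
      have hxh : x ≤ h := (mem_filter.mp hxA).2
      have hkb : rk (p (a i)) x < r - 1 := by
        rw [← hpcard (a i)]; exact rk_lt_card hxA
      set x' : ℕ := (((p (b i)).orderIsoOfFin (hpcard (b i))) ⟨rk (p (a i)) x, hkb⟩ : ℕ) with hx'
      have hx'B : x' ∈ p (b i) := (((p (b i)).orderIsoOfFin (hpcard (b i))) _).2
      have hx'h : x' ≤ h := (mem_filter.mp hx'B).2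
      have hrkB : rk (p (b i)) x' = rk (p (a i)) x := rk_orderIsoOfFin _ _
      have hterm : ∀ j, rk (p (a j)) x = rk (p (b j)) x' := by
        intro j
        rcases eq_or_ne j i with rfl|hji
        · exact hrkB.symm
        have hijne : i ≠ j := fun hc => hji hc.symm
        have hABiso : MatchIso {p (a i), p (a j)} P :=
          hclique _ (mem_image_of_mem _ (mem_univ (a i))) _
            (mem_image_of_mem _ (mem_univ (a j))) (hpinj _ _ (hane i j hijne))
        have hCDiso : MatchIso {p (b i), p (b j)} P :=
          hclique _ (mem_image_of_mem _ (mem_univ (b i))) _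
            (mem_image_of_mem _ (mem_univ (b j))) (hpinj _ _ (hbne i j hijne))
        have hne1 : (p (a i)).min' (hpne _) ≠ (p (a j)).min' (hpne _) := by
          rcases lt_trichotomy i j with h'|h'|h'
          · exact (hmin _ _ (ha h')).ne
          · exact (hijne h').elim
          · exact (hmin _ _ (ha h')).ne'
        have hne2 : (p (b i)).min' (hpne _) ≠ (p (b j)).min' (hpne _) := by
          rcases lt_trichotomy i j with h'|h'|h'
          · exact (hmin _ _ (hb h')).ne
          · exact (hijne h').elim
          · exact (hmin _ _ (hb h')).ne'
        have h1 : ((p (a i)).min' (hpne _) < (p (a j)).min' (hpne _)) ↔ i < j := by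
          rcases lt_trichotomy i j with h'|h'|h'
          · exact iff_of_true (hmin _ _ (ha h')) h'
          · exact (hijne h').elim
          · exact iff_of_false (not_lt.mpr (hmin _ _ (ha h')).le) (not_lt.mpr h'.le)
        have h2 : ((p (b i)).min' (hpne _) < (p (b j)).min' (hpne _)) ↔ i < j := by
          rcases lt_trichotomy i j with h'|h'|h'
          · exact iff_of_true (hmin _ _ (hb h')) h'
          · exact (hijne h').elim
          · exact iff_of_false (not_lt.mpr (hmin _ _ (hb h')).le) (not_lt.mpr h'.le)
        exact pairstep (hpne (a i)) (hpne (a j)) (hpne (b i)) (hpne (b j))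
          hABiso hCDiso hne1 hne2 (h1.trans h2.symm) hxA hx'B hrkB.symm
      have hrkeq : rk S x = rk T x' := by
        rw [hrkS x hxh, hrkT x' hx'h]
        exact Finset.sum_congr rfl (fun j _ => hterm j)
      have hfx : f x = x' := hfchar x (hApS i hxA) x' (hBpT i hx'B) hrkeq
      rw [hfx]
      exact ⟨hx'B, hrkB⟩
    have himgA : ∀ i, (p (a i)).image f = p (b i) := by
      intro i
      apply eq_of_subset_of_card_le
      · intro z hz
        obtain ⟨x, hx, rfl⟩ := mem_image.mp hz
        exact (hfA i x hx).1
      · rw [card_image_of_injOn (hbij.injOn.mono (Finset.coe_subset.mpr (hApS i)))]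
        rw [hpcard, hpcard]
    have hVcount : ∀ i, rk S (v (a i)) =
        t * (r - 1) + (Finset.univ.filter (fun j => v (a j) < v (a i))).card := by
      intro i
      rw [rk, hSdef, filter_biUnion,
        card_biUnion (fun i' _ j _ hij => disjoint_filter_filter (hdS i' j hij))]
      have hterm : ∀ j : Fin t, ((e (a j)).filter (· < v (a i))).card
          = (r - 1) + (if v (a j) < v (a i) then 1 else 0) := by
        intro j
        rw [hedecomp (a j), filter_union, card_union_of_disjoint
          (((disjoint_singleton_right.mpr (hvnp (a j)))).mono (filter_subset _ _) (filter_subset _ _))]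
        congr 1
        · rw [filter_eq_self.mpr, hpcard]
          intro z hz
          have hz2 := (mem_filter.mp hz).2
          have := hvh (a i)
          omega
        · by_cases hlt : v (a j) < v (a i) <;> simp [filter_singleton, hlt]
      rw [Finset.sum_congr rfl (fun j _ => hterm j), Finset.sum_add_distrib]
      congr 1
      · simp [mul_comm]
      · exact (card_filter _ _).symm
    have hVcountT : ∀ i, rk T (v (b i)) =
        t * (r - 1) + (Finset.univ.filter (fun j => v (b j) < v (b i))).card := by
      intro i
      rw [rk, hTdef, filter_biUnion,
        card_biUnion (fun i' _ j _ hij => disjoint_filter_filter (hdT i' j hij))]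
      have hterm : ∀ j : Fin t, ((e (b j)).filter (· < v (b i))).card
          = (r - 1) + (if v (b j) < v (b i) then 1 else 0) := by
        intro j
        rw [hedecomp (b j), filter_union, card_union_of_disjoint
          (((disjoint_singleton_right.mpr (hvnp (b j)))).mono (filter_subset _ _) (filter_subset _ _))]
        congr 1
        · rw [filter_eq_self.mpr, hpcard]
          intro z hz
          have hz2 := (mem_filter.mp hz).2
          have := hvh (b i)
          omega
        · by_cases hlt : v (b j) < v (b i) <;> simp [filter_singleton, hlt]
      rw [Finset.sum_congr rfl (fun j _ => hterm j), Finset.sum_add_distrib]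
      congr 1
      · simp [mul_comm]
      · exact (card_filter _ _).symm
    have hfv : ∀ i, f (v (a i)) = v (b i) := by
      intro i
      apply hfchar _ (heS i (hvmem (a i))) _ (heT i (hvmem (b i)))
      rw [hVcount i, hVcountT i]
      congr 2
      exact filter_congr (fun j _ => by simpa using hiso j i)
    have himgE : ∀ i, (e (a i)).image f = e (b i) := by
      intro i
      rw [hedecomp (a i), hedecomp (b i), image_union, himgA i, image_singleton, hfv i]
    have heainj : Function.Injective (fun i => e (a i)) := by
      intro i j hc
      by_contra hne
      exact hene' _ _ (hane i j hne) hc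
    have hebinj : Function.Injective (fun i => e (b i)) := by
      intro i j hc
      by_contra hne
      exact hene' _ _ (hbne i j hne) hc
    refine ⟨Finset.univ.image (fun i => e (a i)), Finset.univ.image (fun i => e (b i)),
      ?_, ?_, ?_, ?_, ?_, ?_⟩
    · intro z hz
      obtain ⟨i, _, rfl⟩ := mem_image.mp hz
      exact mem_image_of_mem e (mem_univ (a i))
    · intro z hz
      obtain ⟨i, _, rfl⟩ := mem_image.mp hz
      exact mem_image_of_mem e (mem_univ (b i))
    · rw [mSupport_image, mSupport_image]
      rw [Finset.disjoint_left]
      intro x hxS hxT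
      obtain ⟨i, _, hx1⟩ := mem_biUnion.mp hxS
      obtain ⟨j, _, hx2⟩ := mem_biUnion.mp hxT
      exact Finset.disjoint_left.mp (hdisj (a i) (b j) (hab i j)) hx1 hx2
    · refine ⟨f, ?_, ?_, ?_⟩
      · rw [mSupport_image, mSupport_image]
        exact hbij
      · rw [mSupport_image]
        exact hmono
      · rw [Finset.image_image]
        apply Finset.ext
        intro E
        simp only [mem_image, mem_univ, true_and, Function.comp]
        constructor
        · rintro ⟨i, rfl⟩
          exact ⟨i, himgE i⟩
        · rintro ⟨i, rfl⟩
          exact ⟨i, (himgE i).symm⟩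
    · rw [card_image_of_injective _ heainj, card_univ, Fintype.card_fin]
    · rw [card_image_of_injective _ hebinj, card_univ, Fintype.card_fin]
  refine ⟨main, ?_⟩
  have hbdd : BddAbove {k | HasTwins (Finset.image e Finset.univ) k} := by
    refine ⟨(Finset.image e Finset.univ).card, ?_⟩
    rintro k ⟨M₁, M₂, h1, _, _, _, hc1, _⟩
    exact hc1 ▸ card_le_card h1
  apply csSup_le
  · refine ⟨0, fun π => ⟨Fin.elim0, Fin.elim0, ?_, ?_, ?_, ?_⟩⟩
    · intro i j hij
      exact i.elim0
    · intro i j hij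
      exact i.elim0
    · intro i
      exact i.elim0
    · intro i
      exact i.elim0
  · intro k hk
    have hvinj' : Function.Injective v := by
      intro i j hc
      by_contra hne
      exact hvinj i j hne hc
    have hVcard : (Finset.univ.image v).card = m := by
      rw [card_image_of_injective _ hvinj', card_univ, Fintype.card_fin]
    have hπinj : Function.Injective (fun i =>
        ((Finset.univ.image v).orderIsoOfFin hVcard).symm
          ⟨v i, mem_image_of_mem v (mem_univ i)⟩) := by
      intro i j hc
      exact hvinj' (congrArg Subtype.val
        (((Finset.univ.image v).orderIsoOfFin hVcard).symm.injective hc))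
    set π : Equiv.Perm (Fin m) :=
      Equiv.ofBijective _ (Finite.injective_iff_bijective.mp hπinj) with hπdef
    have hπ : ∀ i j, π i < π j ↔ v i < v j := by
      intro i j
      show ((Finset.univ.image v).orderIsoOfFin hVcard).symm ⟨v i, _⟩ <
        ((Finset.univ.image v).orderIsoOfFin hVcard).symm ⟨v j, _⟩ ↔ _
      rw [OrderIso.lt_iff_lt]
      exact Subtype.mk_lt_mk
    obtain ⟨a, b, ha, hb, hne, hpiso⟩ := hk π
    have hiso : ∀ i j, v (a i) < v (a j) ↔ v (b i) < v (b j) := by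
      intro i j
      rw [← hπ, ← hπ]
      exact hpiso i j
    exact le_csSup hbdd (main k a b ha hb hne hiso)
end

section
/- Fix r ≥ 2, n ≥ 1, and 1 ≤ k ≤ n/2. The number of pairs (M, {M_1, M_2}), where M is an ordered r-matching of size n on [rn] and {M_1, M_2} is an unordered pair of vertex-disjoint isomorphic sub-matchings of M each of size k, equals (1/2) · (rn)! / ((rk)! · (rk)! · (rn−2rk)!) · α_k · α_{n−2k}, where α_m = (rm)!/((r!)^m · m!). Equivalently, the expected number of twins of size k in a uniformly random ordered r-matching of size n equals (1/2) · (n!/(n−2k)!) · (1/k!) · (r!)^k / (rk)!. -/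
lemma mem_mSupport {M : Finset (Finset ℕ)} {x : ℕ} :
    x ∈ mSupport M ↔ ∃ e ∈ M, x ∈ e := by
  simp [mSupport, Finset.mem_sup]

lemma subset_mSupport {M : Finset (Finset ℕ)} {e : Finset ℕ} (he : e ∈ M) :
    e ⊆ mSupport M := fun x hx => mem_mSupport.2 ⟨e, he, hx⟩

lemma mSupport_union {M N : Finset (Finset ℕ)} :
    mSupport (M ∪ N) = mSupport M ∪ mSupport N := Finset.sup_union

lemma mSupport_mono {M N : Finset (Finset ℕ)} (h : M ⊆ N) :
    mSupport M ⊆ mSupport N := by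
  intro x hx
  rw [mem_mSupport] at hx ⊢
  obtain ⟨e, he, hxe⟩ := hx
  exact ⟨e, h he, hxe⟩

lemma card_mSupport {r : ℕ} {M : Finset (Finset ℕ)} (h : IsMatching r M) :
    (mSupport M).card = r * M.card := by
  have : mSupport M = M.biUnion (fun e => e) := by
    rw [mSupport, Finset.sup_eq_biUnion]; rfl
  rw [this, Finset.card_biUnion (fun e he f hf hne => h.2 e he f hf hne)]
  rw [Finset.sum_congr rfl (fun e he => h.1 e he), Finset.sum_const, smul_eq_mul,
    Nat.mul_comm]

/-- canonical order-preserving map from `s` onto `t` (junk outside `s` or if cards differ) -/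
noncomputable def canMap (s t : Finset ℕ) : ℕ → ℕ := fun x =>
  if hx : x ∈ s then
    if h : s.card = t.card then
      (t.orderEmbOfFin (rfl : t.card = t.card))
        (Fin.cast h ((s.orderIsoOfFin (rfl : s.card = s.card)).symm ⟨x, hx⟩))
    else 0
  else 0

section canMap
variable {s t : Finset ℕ}

lemma canMap_mem (h : s.card = t.card) {x : ℕ} (hx : x ∈ s) : canMap s t x ∈ t := by
  rw [canMap, dif_pos hx, dif_pos h]
  exact Finset.orderEmbOfFin_mem t rfl _

lemma canMap_strictMonoOn (h : s.card = t.card) {x y : ℕ} (hx : x ∈ s) (hy : y ∈ s) (hxy : x < y) :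
    canMap s t x < canMap s t y := by
  rw [canMap, canMap, dif_pos hx, dif_pos hy, dif_pos h, dif_pos h]
  apply (t.orderEmbOfFin rfl).strictMono
  have : (⟨x, hx⟩ : s) < ⟨y, hy⟩ := hxy
  have h2 := (s.orderIsoOfFin (rfl : s.card = s.card)).symm.strictMono this
  exact h2

lemma canMap_surjOn (h : s.card = t.card) {y : ℕ} (hy : y ∈ t) :
    ∃ x ∈ s, canMap s t x = y := by
  obtain ⟨i, hi⟩ : ∃ i, t.orderEmbOfFin (rfl : t.card = t.card) i = y := by
    have := Finset.range_orderEmbOfFin t (rfl : t.card = t.card)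
    rw [Set.ext_iff] at this
    exact (this y).2 hy
  set j := Fin.cast h.symm i with hj
  set xs := (s.orderIsoOfFin (rfl : s.card = s.card)) j with hxs
  refine ⟨xs, xs.2, ?_⟩
  rw [canMap, dif_pos xs.2, dif_pos h, ← hi]
  congr 1
  have h1 : (s.orderIsoOfFin (rfl : s.card = s.card)).symm ⟨(xs : ℕ), xs.2⟩ = j := by
    rw [OrderIso.symm_apply_eq]
  rw [h1]
  apply Fin.val_injective; simp [hj]

lemma canMap_bijOn (h : s.card = t.card) : Set.BijOn (canMap s t) (s : Set ℕ) (t : Set ℕ) := by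
  refine ⟨fun x hx => canMap_mem h hx, fun x hx y hy hxy => ?_, fun y hy => ?_⟩
  · by_contra hne
    rcases Ne.lt_or_gt hne with hl | hl
    · exact absurd hxy (canMap_strictMonoOn h hx hy hl).ne
    · exact absurd hxy.symm (canMap_strictMonoOn h hy hx hl).ne
  · obtain ⟨x, hx, hxe⟩ := canMap_surjOn h hy
    exact ⟨x, hx, hxe⟩

/-- Uniqueness: any strictly monotone map from `s` into `t` agrees with `canMap` on `s`. -/
lemma canMap_unique (h : s.card = t.card) {f : ℕ → ℕ} (hmaps : ∀ x ∈ s, f x ∈ t)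
    (hmono : ∀ x ∈ s, ∀ y ∈ s, x < y → f x < f y) :
    ∀ x ∈ s, f x = canMap s t x := by
  intro x hx
  set F : Fin t.card → ℕ := fun i => f (s.orderEmbOfFin (rfl : s.card = s.card)
    (Fin.cast h.symm i)) with hF
  have hFmem : ∀ i, F i ∈ t := fun i => hmaps _ (Finset.orderEmbOfFin_mem _ _ _)
  have hFmono : StrictMono F := by
    intro i j hij
    exact hmono _ (Finset.orderEmbOfFin_mem _ _ _) _ (Finset.orderEmbOfFin_mem _ _ _)
      ((s.orderEmbOfFin rfl).strictMono (by simpa using hij))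
  have hFeq := Finset.orderEmbOfFin_unique (rfl : t.card = t.card) hFmem hFmono
  have key := congrFun hFeq (Fin.cast h ((s.orderIsoOfFin (rfl : s.card = s.card)).symm ⟨x, hx⟩))
  rw [hF] at key
  simp only at key
  rw [canMap, dif_pos hx, dif_pos h, ← key]
  congr 1
  have : (s.orderEmbOfFin (rfl : s.card = s.card))
      ((s.orderIsoOfFin (rfl : s.card = s.card)).symm ⟨x, hx⟩) = x := by
    rw [← Finset.coe_orderIsoOfFin_apply]
    simp
  rw [Fin.cast_cast, Fin.cast_eq_self]
  exact this.symm
end canMap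

open Classical in
/-- the set of `r`-matchings with support exactly `S` -/
noncomputable def Mch (r : ℕ) (S : Finset ℕ) : Finset (Finset (Finset ℕ)) :=
  S.powerset.powerset.filter (fun M => IsMatching r M ∧ mSupport M = S)

lemma mem_Mch {r : ℕ} {S : Finset ℕ} {M : Finset (Finset ℕ)} :
    M ∈ Mch r S ↔ IsMatching r M ∧ mSupport M = S := by
  classical
  rw [Mch, Finset.mem_filter, and_iff_right_iff_imp]
  rintro ⟨h1, h2⟩
  rw [Finset.mem_powerset]
  intro e he
  rw [Finset.mem_powerset]
  exact h2 ▸ subset_mSupport he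

lemma card_eq_of_mem_Mch {r m : ℕ} {S : Finset ℕ} {M : Finset (Finset ℕ)} (hr : 1 ≤ r)
    (hM : M ∈ Mch r S) (hS : S.card = r * m) : M.card = m := by
  rw [mem_Mch] at hM
  have := card_mSupport hM.1
  rw [hM.2, hS] at this
  exact Nat.eq_of_mul_eq_mul_left hr this.symm

lemma Mch_empty {r : ℕ} (hr : 1 ≤ r) : Mch r ∅ = {∅} := by
  ext M
  rw [mem_Mch, Finset.mem_singleton]
  constructor
  · rintro ⟨h1, h2⟩
    rw [Finset.eq_empty_iff_forall_notMem]
    intro e he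
    have hc := h1.1 e he
    have : e ⊆ ∅ := h2 ▸ subset_mSupport he
    rw [Finset.subset_empty] at this
    rw [this, Finset.card_empty] at hc
    omega
  · rintro rfl
    exact ⟨⟨fun e he => absurd he (Finset.notMem_empty e),
      fun e he => absurd he (Finset.notMem_empty e)⟩, rfl⟩

lemma card_Mch (r : ℕ) (hr : 1 ≤ r) :
    ∀ m : ℕ, ∀ S : Finset ℕ, S.card = r * m →
      (Mch r S).card * ((Nat.factorial r)^m * Nat.factorial m) = Nat.factorial (r * m) := by
  intro m
  induction m with
  | zero =>
    intro S hS
    rw [Nat.mul_zero, Finset.card_eq_zero] at hS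
    rw [hS, Mch_empty hr]
    simp
  | succ m ih =>
    intro S hS
    have hSne : S.Nonempty := by
      rw [← Finset.card_pos, hS]
      exact Nat.mul_pos hr (Nat.succ_pos m)
    set a := S.min' hSne with ha
    have haS : a ∈ S := S.min'_mem hSne
    set E := ((S.erase a).powersetCard (r - 1)).image (insert a) with hE
    have hmemE : ∀ e ∈ E, e ⊆ S ∧ a ∈ e ∧ e.card = r := by
      intro e he
      rw [hE, Finset.mem_image] at he
      obtain ⟨e', he', rfl⟩ := he
      rw [Finset.mem_powersetCard] at he'
      have hae' : a ∉ e' := fun h => (Finset.mem_erase.1 (he'.1 h)).1 rfl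
      refine ⟨?_, Finset.mem_insert_self a e', ?_⟩
      · intro x hx
        rcases Finset.mem_insert.1 hx with rfl | hx
        · exact haS
        · exact Finset.mem_of_mem_erase (he'.1 hx)
      · rw [Finset.card_insert_of_notMem hae', he'.2]
        omega
    -- the decomposition
    have hdecomp : Mch r S = E.biUnion (fun e => (Mch r (S \ e)).image (insert e)) := by
      ext M
      rw [Finset.mem_biUnion]
      constructor
      · intro hM
        obtain ⟨h1, h2⟩ := mem_Mch.1 hM
        obtain ⟨e, heM, hae⟩ : ∃ e ∈ M, a ∈ e := mem_mSupport.1 (h2 ▸ haS)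
        have heS : e ⊆ S := h2 ▸ subset_mSupport heM
        have heE : e ∈ E := by
          rw [hE, Finset.mem_image]
          refine ⟨e.erase a, ?_, Finset.insert_erase hae⟩
          rw [Finset.mem_powersetCard]
          refine ⟨fun x hx => ?_, ?_⟩
          · rw [Finset.mem_erase] at hx ⊢
            exact ⟨hx.1, heS hx.2⟩
          · rw [Finset.card_erase_of_mem hae, h1.1 e heM]
        refine ⟨e, heE, Finset.mem_image.2 ⟨M.erase e, ?_, Finset.insert_erase heM⟩⟩
        rw [mem_Mch]
        refine ⟨⟨fun f hf => h1.1 f (Finset.mem_of_mem_erase hf),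
          fun f hf g hg => h1.2 f (Finset.mem_of_mem_erase hf) g (Finset.mem_of_mem_erase hg)⟩, ?_⟩
        ext x
        rw [mem_mSupport, Finset.mem_sdiff]
        constructor
        · rintro ⟨f, hf, hxf⟩
          obtain ⟨hfe, hfM⟩ := Finset.mem_erase.1 hf
          refine ⟨h2 ▸ subset_mSupport hfM hxf, fun hxe => ?_⟩
          exact Finset.disjoint_left.1 (h1.2 f hfM e heM hfe) hxf hxe
        · rintro ⟨hxS, hxe⟩
          obtain ⟨f, hfM, hxf⟩ := mem_mSupport.1 (h2 ▸ hxS : x ∈ mSupport M)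
          exact ⟨f, Finset.mem_erase.2 ⟨fun h => hxe (h ▸ hxf), hfM⟩, hxf⟩
      · rintro ⟨e, heE, hM⟩
        obtain ⟨heS, hae, hecard⟩ := hmemE e heE
        obtain ⟨M₁, hM₁, rfl⟩ := Finset.mem_image.1 hM
        obtain ⟨h1, h2⟩ := mem_Mch.1 hM₁
        have hsub : ∀ f ∈ M₁, Disjoint e f := by
          intro f hf
          have : f ⊆ S \ e := h2 ▸ subset_mSupport hf
          exact (Finset.disjoint_sdiff.mono_right this)
        rw [mem_Mch]
        refine ⟨⟨fun f hf => ?_, fun f hf g hg hfg => ?_⟩, ?_⟩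
        · rcases Finset.mem_insert.1 hf with rfl | hf
          · exact hecard
          · exact h1.1 f hf
        · have hf' := Finset.mem_insert.1 hf
          have hg' := Finset.mem_insert.1 hg
          rcases hf' with heq | hf' <;> rcases hg' with heq2 | hg'
          · exact absurd (heq.trans heq2.symm) hfg
          · exact heq ▸ hsub g hg'
          · exact heq2 ▸ (hsub f hf').symm
          · exact h1.2 f hf' g hg' hfg
        · rw [mSupport, Finset.sup_insert, ← mSupport, h2]
          simp only [id]
          exact Finset.union_sdiff_of_subset heS
    -- disjointness and cardinality
    have hacard : ∀ e ∈ E, (S \ e).card = r * m := by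
      intro e he
      obtain ⟨heS, _, hecard⟩ := hmemE e he
      rw [Finset.card_sdiff_of_subset heS, hS, hecard]
      ring_nf
      omega
    have hnotmem : ∀ e ∈ E, ∀ M₁ ∈ Mch r (S \ e), e ∉ M₁ := by
      intro e he M₁ hM₁ hcon
      obtain ⟨heS, hae, hecard⟩ := hmemE e he
      have : e ⊆ S \ e := (mem_Mch.1 hM₁).2 ▸ subset_mSupport hcon
      exact (Finset.mem_sdiff.1 (this hae)).2 hae
    have hsum : (Mch r S).card = ∑ e ∈ E, (Mch r (S \ e)).card := by
      rw [hdecomp, Finset.card_biUnion, Finset.sum_congr rfl]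
      · intro e he
        apply Finset.card_image_of_injOn
        intro M₁ hM₁ M₂ hM₂ hins
        rw [← Finset.erase_insert (hnotmem e he M₁ hM₁), hins,
          Finset.erase_insert (hnotmem e he M₂ hM₂)]
      · intro e he f hf hef
        rw [Function.onFun, Finset.disjoint_left]
        intro M hMe hMf
        obtain ⟨M₁, hM₁, rfl⟩ := Finset.mem_image.1 hMe
        obtain ⟨M₂, hM₂, heq⟩ := Finset.mem_image.1 hMf
        have haf : a ∈ f := (hmemE f hf).2.1
        have hfmem : f ∈ insert e M₁ := heq ▸ Finset.mem_insert_self f M₂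
        rcases Finset.mem_insert.1 hfmem with heq2 | hfM₁
        · exact hef heq2.symm
        · have : f ⊆ S \ e := (mem_Mch.1 hM₁).2 ▸ subset_mSupport hfM₁
          exact (Finset.mem_sdiff.1 (this haf)).2 (hmemE e he).2.1
    have hEcard : E.card = Nat.choose (r * (m + 1) - 1) (r - 1) := by
      rw [hE, Finset.card_image_of_injOn, Finset.card_powersetCard,
        Finset.card_erase_of_mem haS, hS]
      intro s₁ hs₁ s₂ hs₂ hins
      have ha₁ : a ∉ s₁ := fun h =>
        (Finset.mem_erase.1 ((Finset.mem_powersetCard.1 hs₁).1 h)).1 rfl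
      have ha₂ : a ∉ s₂ := fun h =>
        (Finset.mem_erase.1 ((Finset.mem_powersetCard.1 hs₂).1 h)).1 rfl
      rw [← Finset.erase_insert ha₁, hins, Finset.erase_insert ha₂]
    -- put it together
    have hterm : ∀ e ∈ E, (Mch r (S \ e)).card *
        ((Nat.factorial r)^(m+1) * Nat.factorial (m+1)) =
        Nat.factorial (r * m) * (Nat.factorial r * (m + 1)) := by
      intro e he
      have := ih (S \ e) (hacard e he)
      calc (Mch r (S \ e)).card * ((Nat.factorial r)^(m+1) * Nat.factorial (m+1))
          = ((Mch r (S \ e)).card * ((Nat.factorial r)^m * Nat.factorial m)) *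
            (Nat.factorial r * (m+1)) := by
            rw [pow_succ, Nat.factorial_succ]; ring
        _ = Nat.factorial (r * m) * (Nat.factorial r * (m + 1)) := by rw [this]
    rw [hsum, Finset.sum_mul, Finset.sum_congr rfl hterm, Finset.sum_const, smul_eq_mul,
      hEcard]
    -- final arithmetic
    set N := r * (m + 1) with hN
    have hNrm : N = r * m + r := by rw [hN]; ring
    have hkey := Nat.choose_mul_factorial_mul_factorial
      (show r - 1 ≤ N - 1 by omega)
    have hsub2 : N - 1 - (r - 1) = r * m := by omega
    rw [hsub2] at hkey
    have h2 : r * Nat.factorial (r-1) = Nat.factorial r := Nat.mul_factorial_pred (by omega)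
    have h3 : N * Nat.factorial (N-1) = Nat.factorial N := Nat.mul_factorial_pred (by omega)
    calc Nat.choose (N - 1) (r - 1) * (Nat.factorial (r * m) * (Nat.factorial r * (m + 1)))
        = (Nat.choose (N-1) (r-1) * Nat.factorial (r-1) * Nat.factorial (r*m)) *
          (r * (m+1)) := by rw [← h2]; ring
      _ = Nat.factorial (N-1) * N := by rw [hkey, hNrm]; ring
      _ = Nat.factorial N := by rw [← h3]; ring

/-- pairs of disjoint `c`-subsets of `[N]` -/
noncomputable def PairsB (N c : ℕ) : Finset (Finset ℕ × Finset ℕ) := by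
  classical
  exact (((Finset.Icc 1 N).powersetCard c) ×ˢ ((Finset.Icc 1 N).powersetCard c)).filter
    (fun p => Disjoint p.1 p.2)

lemma mem_PairsB {N c : ℕ} {p : Finset ℕ × Finset ℕ} :
    p ∈ PairsB N c ↔ (p.1 ⊆ Finset.Icc 1 N ∧ p.1.card = c) ∧
      (p.2 ⊆ Finset.Icc 1 N ∧ p.2.card = c) ∧ Disjoint p.1 p.2 := by
  classical
  rw [PairsB, Finset.mem_filter, Finset.mem_product, Finset.mem_powersetCard,
    Finset.mem_powersetCard]
  tauto

lemma card_PairsB {N c : ℕ} (hc : c ≤ N) :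
    (PairsB N c).card = Nat.choose N c * Nat.choose (N - c) c := by
  classical
  have hdecomp : PairsB N c = ((Finset.Icc 1 N).powersetCard c).biUnion
      (fun S₁ => (((Finset.Icc 1 N) \ S₁).powersetCard c).image (fun S₂ => (S₁, S₂))) := by
    ext p
    rw [mem_PairsB, Finset.mem_biUnion]
    constructor
    · rintro ⟨⟨h1, h2⟩, ⟨h3, h4⟩, h5⟩
      refine ⟨p.1, Finset.mem_powersetCard.2 ⟨h1, h2⟩, Finset.mem_image.2 ⟨p.2, ?_, rfl⟩⟩
      exact Finset.mem_powersetCard.2 ⟨Finset.subset_sdiff.2 ⟨h3, h5.symm⟩, h4⟩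
    · rintro ⟨S₁, hS₁, hp⟩
      obtain ⟨S₂, hS₂, rfl⟩ := Finset.mem_image.1 hp
      rw [Finset.mem_powersetCard] at hS₁ hS₂
      obtain ⟨h3, h5⟩ := Finset.subset_sdiff.1 hS₂.1
      exact ⟨⟨hS₁.1, hS₁.2⟩, ⟨h3, hS₂.2⟩, h5.symm⟩
  rw [hdecomp, Finset.card_biUnion]
  · have : ∀ S₁ ∈ (Finset.Icc 1 N).powersetCard c,
        ((((Finset.Icc 1 N) \ S₁).powersetCard c).image (fun S₂ => (S₁, S₂))).card =
        Nat.choose (N - c) c := by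
      intro S₁ hS₁
      rw [Finset.mem_powersetCard] at hS₁
      rw [Finset.card_image_of_injective _ (fun a b hab => by
          simpa using (Prod.ext_iff.1 hab).2),
        Finset.card_powersetCard, Finset.card_sdiff_of_subset hS₁.1, Nat.card_Icc, hS₁.2]
      norm_num
    rw [Finset.sum_congr rfl this, Finset.sum_const, smul_eq_mul, Finset.card_powersetCard,
      Nat.card_Icc]
    norm_num
  · intro S₁ h₁ S₂ h₂ hne
    rw [Function.onFun, Finset.disjoint_left]
    rintro p hp hq
    obtain ⟨a, _, rfl⟩ := Finset.mem_image.1 hp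
    obtain ⟨b, _, heq⟩ := Finset.mem_image.1 hq
    exact hne (Prod.ext_iff.1 heq).1.symm

section imageLemmas
variable {φ : ℕ → ℕ} {S T : Finset ℕ}

lemma mSupport_image_s15 (M : Finset (Finset ℕ)) (φ : ℕ → ℕ) :
    mSupport (M.image (fun e => e.image φ)) = (mSupport M).image φ := by
  ext x
  constructor
  · intro hx
    obtain ⟨f, hf, hxf⟩ := mem_mSupport.1 hx
    obtain ⟨e, he, rfl⟩ := Finset.mem_image.1 hf
    obtain ⟨y, hy, rfl⟩ := Finset.mem_image.1 hxf
    exact Finset.mem_image.2 ⟨y, mem_mSupport.2 ⟨e, he, hy⟩, rfl⟩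
  · intro hx
    obtain ⟨y, hy, rfl⟩ := Finset.mem_image.1 hx
    obtain ⟨e, he, hye⟩ := mem_mSupport.1 hy
    exact mem_mSupport.2
      ⟨e.image φ, Finset.mem_image.2 ⟨e, he, rfl⟩, Finset.mem_image.2 ⟨y, hye, rfl⟩⟩

lemma image_injOn_subsets (hinj : Set.InjOn φ (S : Set ℕ)) {e f : Finset ℕ}
    (he : e ⊆ S) (hf : f ⊆ S) (h : e.image φ = f.image φ) : e = f := by
  ext x
  constructor
  · intro hx
    have : φ x ∈ f.image φ := h ▸ Finset.mem_image_of_mem φ hx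
    obtain ⟨y, hy, hxy⟩ := Finset.mem_image.1 this
    rwa [← hinj (hf hy) (he hx) hxy]
  · intro hx
    have : φ x ∈ e.image φ := h ▸ Finset.mem_image_of_mem φ hx
    obtain ⟨y, hy, hxy⟩ := Finset.mem_image.1 this
    rwa [← hinj (he hy) (hf hx) hxy]

lemma image_disjoint (hinj : Set.InjOn φ (S : Set ℕ)) {e f : Finset ℕ}
    (he : e ⊆ S) (hf : f ⊆ S) (h : Disjoint e f) : Disjoint (e.image φ) (f.image φ) := by
  rw [Finset.disjoint_left] at h ⊢
  rintro x hx hx'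
  obtain ⟨y, hy, rfl⟩ := Finset.mem_image.1 hx
  obtain ⟨z, hz, hzy⟩ := Finset.mem_image.1 hx'
  exact h hy (hinj (hf hz) (he hy) hzy ▸ hz)
end imageLemmas

def TripleP (r n k : ℕ) (T : Finset (Finset ℕ) × Finset (Finset ℕ) × Finset (Finset ℕ)) :
    Prop :=
  IsOrderedMatching r n T.1 ∧ T.2.1 ⊆ T.1 ∧ T.2.2 ⊆ T.1 ∧
    Disjoint (mSupport T.2.1) (mSupport T.2.2) ∧ MatchIso T.2.1 T.2.2 ∧
    T.2.1.card = k ∧ T.2.2.card = k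

noncomputable def TT (r n k : ℕ) :
    Finset (Finset (Finset ℕ) × Finset (Finset ℕ) × Finset (Finset ℕ)) := by
  classical
  exact ((Finset.Icc 1 (r*n)).powerset.powerset ×ˢ (Finset.Icc 1 (r*n)).powerset.powerset ×ˢ
    (Finset.Icc 1 (r*n)).powerset.powerset).filter (TripleP r n k)

lemma mem_TT {r n k : ℕ} {T : Finset (Finset ℕ) × Finset (Finset ℕ) × Finset (Finset ℕ)} :
    T ∈ TT r n k ↔ TripleP r n k T := by
  classical
  rw [TT, Finset.mem_filter, and_iff_right_iff_imp]
  intro hT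
  obtain ⟨hM, h1, h2, _⟩ := hT
  have hMp : T.1 ∈ (Finset.Icc 1 (r*n)).powerset.powerset := by
    rw [Finset.mem_powerset]
    intro e he
    rw [Finset.mem_powerset]
    exact hM.2.2 ▸ subset_mSupport he
  rw [Finset.mem_product, Finset.mem_product]
  refine ⟨hMp, ?_, ?_⟩ <;> rw [Finset.mem_powerset] <;>
    exact fun e he => Finset.mem_powerset.1 hMp (by first | exact h1 he | exact h2 he)

noncomputable def GMap (p : Finset ℕ × Finset ℕ)
    (q : Finset (Finset ℕ) × Finset (Finset ℕ)) :
    Finset (Finset ℕ) × Finset (Finset ℕ) × Finset (Finset ℕ) :=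
  (q.1 ∪ q.1.image (fun e => e.image (canMap p.1 p.2)) ∪ q.2,
    q.1, q.1.image (fun e => e.image (canMap p.1 p.2)))

lemma IsMatching.subset {r : ℕ} {M N : Finset (Finset ℕ)} (h : IsMatching r M) (hNM : N ⊆ M) :
    IsMatching r N :=
  ⟨fun e he => h.1 e (hNM he), fun e he f hf => h.2 e (hNM he) f (hNM hf)⟩

lemma disjoint_of_supports {A B : Finset ℕ} {e f : Finset ℕ} (he : e ⊆ A) (hf : f ⊆ B)
    (h : Disjoint A B) : Disjoint e f := (h.mono he hf)

/-- key construction lemma: `GMap` of valid data is a valid triple with supports `p` -/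
lemma GMap_mem {r n k : ℕ} (hr : 1 ≤ r) (hk2 : 2*k ≤ n)
    {p : Finset ℕ × Finset ℕ} {q : Finset (Finset ℕ) × Finset (Finset ℕ)}
    (hp : p ∈ PairsB (r*n) (r*k)) (hq1 : q.1 ∈ Mch r p.1)
    (hq2 : q.2 ∈ Mch r (Finset.Icc 1 (r*n) \ (p.1 ∪ p.2))) :
    TripleP r n k (GMap p q) ∧ mSupport (GMap p q).2.1 = p.1 ∧
      mSupport (GMap p q).2.2 = p.2 := by
  obtain ⟨⟨hS1sub, hS1card⟩, ⟨hS2sub, hS2card⟩, hdisj⟩ := mem_PairsB.1 hp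
  have hcards : p.1.card = p.2.card := by rw [hS1card, hS2card]
  set φ := canMap p.1 p.2 with hφ
  have hbij : Set.BijOn φ (p.1 : Set ℕ) (p.2 : Set ℕ) := canMap_bijOn hcards
  obtain ⟨hm1, hsupp1⟩ := mem_Mch.1 hq1
  obtain ⟨hm0, hsupp0⟩ := mem_Mch.1 hq2
  set M₁ := q.1
  set M₂ := q.1.image (fun e => e.image φ) with hM₂def
  set M₀ := q.2
  have hedge1 : ∀ e ∈ M₁, e ⊆ p.1 := fun e he => hsupp1 ▸ subset_mSupport he
  have hedge0 : ∀ e ∈ M₀, e ⊆ Finset.Icc 1 (r*n) \ (p.1 ∪ p.2) :=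
    fun e he => hsupp0 ▸ subset_mSupport he
  have hsupp2 : mSupport M₂ = p.2 := by
    rw [hM₂def, mSupport_image_s15, hsupp1]
    apply Finset.coe_injective
    rw [Finset.coe_image, hbij.image_eq]
  have hm2 : IsMatching r M₂ := by
    constructor
    · intro e' he'
      obtain ⟨e, he, rfl⟩ := Finset.mem_image.1 he'
      rw [Finset.card_image_of_injOn (hbij.injOn.mono (by exact_mod_cast hedge1 e he))]
      exact hm1.1 e he
    · intro e' he' f' hf' hne
      obtain ⟨e, he, rfl⟩ := Finset.mem_image.1 he'
      obtain ⟨f, hf, rfl⟩ := Finset.mem_image.1 hf'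
      have : e ≠ f := fun h => hne (h ▸ rfl)
      exact image_disjoint hbij.injOn (hedge1 e he) (hedge1 f hf)
        (hm1.2 e he f hf this)
  have hedge2 : ∀ e ∈ M₂, e ⊆ p.2 := fun e he => hsupp2 ▸ subset_mSupport he
  have hM₁card : M₁.card = k := card_eq_of_mem_Mch hr hq1 hS1card
  have hM₂card : M₂.card = k := by
    rw [hM₂def, Finset.card_image_of_injOn, hM₁card]
    intro e he f hf hef
    exact image_injOn_subsets hbij.injOn (hedge1 e he) (hedge1 f hf) hef
  have hrestcard : (Finset.Icc 1 (r*n) \ (p.1 ∪ p.2)).card = r * (n - 2*k) := by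
    have h1 : (p.1 ∪ p.2).card = r*k + r*k := by
      rw [Finset.card_union_of_disjoint hdisj, hS1card, hS2card]
    have hsub : p.1 ∪ p.2 ⊆ Finset.Icc 1 (r*n) := Finset.union_subset hS1sub hS2sub
    rw [Finset.card_sdiff_of_subset hsub, h1, Nat.card_Icc]
    have : r * (n - 2*k) = r*n - 2*(r*k) := by rw [Nat.mul_sub]; ring_nf
    omega
  have hM₀card : M₀.card = n - 2*k := card_eq_of_mem_Mch hr hq2 hrestcard
  -- disjointness of supports
  have hd01 : Disjoint (Finset.Icc 1 (r*n) \ (p.1 ∪ p.2)) p.1 :=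
    Finset.sdiff_disjoint.mono_right Finset.subset_union_left
  have hd02 : Disjoint (Finset.Icc 1 (r*n) \ (p.1 ∪ p.2)) p.2 :=
    Finset.sdiff_disjoint.mono_right Finset.subset_union_right
  -- edge-set disjointness
  have hnonempty : ∀ e ∈ M₁ ∪ M₂ ∪ M₀, e.Nonempty := by
    intro e he
    rw [← Finset.card_pos]
    rcases Finset.mem_union.1 he with he | he
    · rcases Finset.mem_union.1 he with he | he
      · rw [hm1.1 e he]; omega
      · rw [hm2.1 e he]; omega
    · rw [hm0.1 e he]; omega
  have hdE12 : Disjoint M₁ M₂ := by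
    rw [Finset.disjoint_left]
    intro e he1 he2
    obtain ⟨x, hx⟩ := hnonempty e (by simp [he1])
    exact Finset.disjoint_left.1 hdisj (hedge1 e he1 hx) (hedge2 e he2 hx)
  have hdE10 : Disjoint M₁ M₀ := by
    rw [Finset.disjoint_left]
    intro e he1 he0
    obtain ⟨x, hx⟩ := hnonempty e (by simp [he1])
    exact Finset.disjoint_left.1 hd01 (hedge0 e he0 hx) (hedge1 e he1 hx)
  have hdE20 : Disjoint M₂ M₀ := by
    rw [Finset.disjoint_left]
    intro e he2 he0
    obtain ⟨x, hx⟩ := hnonempty e (by simp [he2])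
    exact Finset.disjoint_left.1 hd02 (hedge0 e he0 hx) (hedge2 e he2 hx)
  set M := M₁ ∪ M₂ ∪ M₀ with hMdef
  have hMmatch : IsMatching r M := by
    constructor
    · intro e he
      rcases Finset.mem_union.1 he with he | he
      · rcases Finset.mem_union.1 he with he | he
        · exact hm1.1 e he
        · exact hm2.1 e he
      · exact hm0.1 e he
    · intro e he f hf hne
      rcases Finset.mem_union.1 he with he | he
      · rcases Finset.mem_union.1 he with he | he <;>
          [skip; skip] <;> rcases Finset.mem_union.1 hf with hf' | hf'
        · rcases Finset.mem_union.1 hf' with hf'' | hf''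
          · exact hm1.2 e he f hf'' hne
          · exact disjoint_of_supports (hedge1 e he) (hedge2 f hf'') hdisj
        · exact disjoint_of_supports (hedge1 e he) (hedge0 f hf') hd01.symm
        · rcases Finset.mem_union.1 hf' with hf'' | hf''
          · exact disjoint_of_supports (hedge2 e he) (hedge1 f hf'') hdisj.symm
          · exact hm2.2 e he f hf'' hne
        · exact disjoint_of_supports (hedge2 e he) (hedge0 f hf') hd02.symm
      · rcases Finset.mem_union.1 hf with hf' | hf'
        · rcases Finset.mem_union.1 hf' with hf'' | hf''
          · exact disjoint_of_supports (hedge0 e he) (hedge1 f hf'') hd01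
          · exact disjoint_of_supports (hedge0 e he) (hedge2 f hf'') hd02
        · exact hm0.2 e he f hf' hne
  have hMcard : M.card = n := by
    rw [hMdef, Finset.card_union_of_disjoint, Finset.card_union_of_disjoint hdE12,
      hM₁card, hM₂card, hM₀card]
    · omega
    · exact Finset.disjoint_union_left.2 ⟨hdE10, hdE20⟩
  have hMsupp : mSupport M = Finset.Icc 1 (r*n) := by
    rw [hMdef, mSupport_union, mSupport_union, hsupp1, hsupp2, hsupp0]
    exact Finset.union_sdiff_of_subset (Finset.union_subset hS1sub hS2sub)
  refine ⟨⟨⟨hMmatch, hMcard, hMsupp⟩, ?_, ?_, ?_, ?_, hM₁card, hM₂card⟩, hsupp1, hsupp2⟩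
  · exact Finset.subset_union_left.trans Finset.subset_union_left
  · exact Finset.subset_union_right.trans Finset.subset_union_left
  · rw [show mSupport (GMap p q).2.1 = mSupport M₁ from rfl,
      show mSupport (GMap p q).2.2 = mSupport M₂ from rfl, hsupp1, hsupp2]
    exact hdisj
  · refine ⟨φ, ?_, ?_, rfl⟩
    · rw [show mSupport (GMap p q).2.1 = mSupport M₁ from rfl,
        show mSupport (GMap p q).2.2 = mSupport M₂ from rfl, hsupp1, hsupp2]
      exact hbij
    · intro x hx y hy hxy
      rw [show mSupport (GMap p q).2.1 = mSupport M₁ from rfl, hsupp1] at hx hy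
      exact canMap_strictMonoOn hcards hx hy hxy

/-- forward lemma: a valid triple decomposes through `GMap` -/
lemma TripleP_decomp {r n k : ℕ} (hr : 1 ≤ r)
    {T : Finset (Finset ℕ) × Finset (Finset ℕ) × Finset (Finset ℕ)}
    (hT : TripleP r n k T) :
    (mSupport T.2.1, mSupport T.2.2) ∈ PairsB (r*n) (r*k) ∧
    T.2.1 ∈ Mch r (mSupport T.2.1) ∧
    T.1 \ (T.2.1 ∪ T.2.2) ∈
      Mch r (Finset.Icc 1 (r*n) \ (mSupport T.2.1 ∪ mSupport T.2.2)) ∧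
    T = GMap (mSupport T.2.1, mSupport T.2.2) (T.2.1, T.1 \ (T.2.1 ∪ T.2.2)) := by
  obtain ⟨hM, hsub1, hsub2, hdisj, hiso, hc1, hc2⟩ := hT
  set M := T.1
  set M₁ := T.2.1
  set M₂ := T.2.2
  have hsm1 : IsMatching r M₁ := hM.1.subset hsub1
  have hsm2 : IsMatching r M₂ := hM.1.subset hsub2
  have hS1card : (mSupport M₁).card = r * k := by rw [card_mSupport hsm1, hc1]
  have hS2card : (mSupport M₂).card = r * k := by rw [card_mSupport hsm2, hc2]
  have hS1sub : mSupport M₁ ⊆ Finset.Icc 1 (r*n) := hM.2.2 ▸ mSupport_mono hsub1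
  have hS2sub : mSupport M₂ ⊆ Finset.Icc 1 (r*n) := hM.2.2 ▸ mSupport_mono hsub2
  have hpmem : (mSupport M₁, mSupport M₂) ∈ PairsB (r*n) (r*k) :=
    mem_PairsB.2 ⟨⟨hS1sub, hS1card⟩, ⟨hS2sub, hS2card⟩, hdisj⟩
  have hq1 : M₁ ∈ Mch r (mSupport M₁) := mem_Mch.2 ⟨hsm1, rfl⟩
  -- the remainder matching
  have hq2 : M \ (M₁ ∪ M₂) ∈
      Mch r (Finset.Icc 1 (r*n) \ (mSupport M₁ ∪ mSupport M₂)) := by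
    rw [mem_Mch]
    refine ⟨hM.1.subset Finset.sdiff_subset, ?_⟩
    ext x
    rw [Finset.mem_sdiff, Finset.mem_union]
    constructor
    · intro hx
      obtain ⟨e, he, hxe⟩ := mem_mSupport.1 hx
      obtain ⟨heM, heN⟩ := Finset.mem_sdiff.1 he
      refine ⟨hM.2.2 ▸ subset_mSupport heM hxe, ?_⟩
      rintro (hx1 | hx2)
      · obtain ⟨f, hf, hxf⟩ := mem_mSupport.1 hx1
        have hne : e ≠ f := fun h => heN (Finset.mem_union_left _ (h ▸ hf))
        exact Finset.disjoint_left.1 (hM.1.2 e heM f (hsub1 hf) hne) hxe hxf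
      · obtain ⟨f, hf, hxf⟩ := mem_mSupport.1 hx2
        have hne : e ≠ f := fun h => heN (Finset.mem_union_right _ (h ▸ hf))
        exact Finset.disjoint_left.1 (hM.1.2 e heM f (hsub2 hf) hne) hxe hxf
    · rintro ⟨hxI, hxn⟩
      obtain ⟨e, he, hxe⟩ := mem_mSupport.1 (hM.2.2 ▸ hxI : x ∈ mSupport M)
      refine mem_mSupport.2 ⟨e, Finset.mem_sdiff.2 ⟨he, fun hcon => ?_⟩, hxe⟩
      rcases Finset.mem_union.1 hcon with h | h
      · exact hxn (Or.inl (mem_mSupport.2 ⟨e, h, hxe⟩))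
      · exact hxn (Or.inr (mem_mSupport.2 ⟨e, h, hxe⟩))
  refine ⟨hpmem, hq1, hq2, ?_⟩
  -- the equality
  obtain ⟨f, hbij, hmono, himg⟩ := hiso
  have hS2img : mSupport M₂ = (mSupport M₁).image f := by
    apply Finset.coe_injective
    rw [Finset.coe_image, hbij.image_eq]
  have hcards : (mSupport M₁).card = (mSupport M₂).card := by
    rw [hS2img, Finset.card_image_of_injOn hbij.injOn]
  have hfcan : ∀ x ∈ mSupport M₁, f x = canMap (mSupport M₁) (mSupport M₂) x :=
    canMap_unique hcards (fun x hx => hbij.mapsTo hx) hmono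
  have himg2 : M₂ = M₁.image (fun e => e.image (canMap (mSupport M₁) (mSupport M₂))) := by
    conv_lhs => rw [himg]
    apply Finset.image_congr
    intro e he
    exact Finset.image_congr (fun x hx => hfcan x (subset_mSupport he hx))
  have hcomp1 : M = M₁ ∪ M₁.image (fun e => e.image (canMap (mSupport M₁) (mSupport M₂)))
      ∪ (M \ (M₁ ∪ M₂)) := by
    rw [← himg2]
    exact (Finset.union_sdiff_of_subset (Finset.union_subset hsub1 hsub2)).symm
  exact Prod.ext hcomp1 (Prod.ext rfl himg2)

lemma TT_decomp {r n k : ℕ} (hr : 1 ≤ r) (hk2 : 2*k ≤ n) :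
    TT r n k = (PairsB (r*n) (r*k)).biUnion (fun p =>
      ((Mch r p.1) ×ˢ (Mch r (Finset.Icc 1 (r*n) \ (p.1 ∪ p.2)))).image (GMap p)) := by
  ext T
  rw [mem_TT, Finset.mem_biUnion]
  constructor
  · intro hT
    obtain ⟨hp, hq1, hq2, heq⟩ := TripleP_decomp hr hT
    exact ⟨_, hp, Finset.mem_image.2 ⟨(T.2.1, T.1 \ (T.2.1 ∪ T.2.2)),
      Finset.mem_product.2 ⟨hq1, hq2⟩, heq.symm⟩⟩
  · rintro ⟨p, hp, hT⟩
    obtain ⟨q, hq, rfl⟩ := Finset.mem_image.1 hT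
    rw [Finset.mem_product] at hq
    exact (GMap_mem hr hk2 hp hq.1 hq.2).1

lemma GMap_injOn {r n k : ℕ} (hr : 1 ≤ r) (hk2 : 2*k ≤ n)
    {p : Finset ℕ × Finset ℕ} (hp : p ∈ PairsB (r*n) (r*k)) :
    Set.InjOn (GMap p) ((Mch r p.1) ×ˢ (Mch r (Finset.Icc 1 (r*n) \ (p.1 ∪ p.2)))) := by
  intro q hq q' hq' heq
  obtain ⟨hq1, hq2⟩ := hq
  obtain ⟨hq1', hq2'⟩ := hq'
  rw [Finset.mem_coe] at hq1 hq2 hq1' hq2'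
  have h2 : q.1 = q'.1 := congrArg (fun T => T.2.1) heq
  have h1 : q.1 ∪ q.1.image (fun e => e.image (canMap p.1 p.2)) ∪ q.2 =
      q'.1 ∪ q'.1.image (fun e => e.image (canMap p.1 p.2)) ∪ q'.2 :=
    congrArg (fun T => T.1) heq
  rw [← h2] at h1
  -- cancel the first part
  have hdis : ∀ q₂ : Finset (Finset ℕ), q₂ ∈ Mch r (Finset.Icc 1 (r*n) \ (p.1 ∪ p.2)) →
      Disjoint (q.1 ∪ q.1.image (fun e => e.image (canMap p.1 p.2))) q₂ := by
    intro q₂ hq₂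
    have h := (GMap_mem hr hk2 hp hq1 hq₂ : TripleP r n k (GMap p (q.1, q₂)) ∧ _)
    obtain ⟨⟨hM, _⟩, hs1, hs2⟩ := h
    rw [Finset.disjoint_left]
    intro e he he₂
    have hecard : e.card = r := (mem_Mch.1 hq₂).1.1 e he₂
    have hene : e.Nonempty := by rw [← Finset.card_pos, hecard]; omega
    obtain ⟨x, hx⟩ := hene
    have hxrest : x ∈ Finset.Icc 1 (r*n) \ (p.1 ∪ p.2) :=
      (mem_Mch.1 hq₂).2 ▸ subset_mSupport he₂ hx
    have hxor : x ∈ p.1 ∪ p.2 := by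
      rcases Finset.mem_union.1 he with he' | he'
      · exact Finset.mem_union_left _ ((mem_Mch.1 hq1).2 ▸ subset_mSupport he' hx)
      · refine Finset.mem_union_right _ ?_
        have : mSupport (q.1.image (fun e => e.image (canMap p.1 p.2))) = p.2 := hs2
        exact this ▸ subset_mSupport he' hx
    exact (Finset.mem_sdiff.1 hxrest).2 hxor
  have hcancel : ∀ q₂ : Finset (Finset ℕ), q₂ ∈ Mch r (Finset.Icc 1 (r*n) \ (p.1 ∪ p.2)) →
      (q.1 ∪ q.1.image (fun e => e.image (canMap p.1 p.2)) ∪ q₂) \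
        (q.1 ∪ q.1.image (fun e => e.image (canMap p.1 p.2))) = q₂ := by
    intro q₂ hq₂
    rw [Finset.union_sdiff_cancel_left (hdis q₂ hq₂)]
  have h3 : q.2 = q'.2 := by
    rw [← hcancel q.2 hq2, h1, hcancel q'.2 hq2']
  exact Prod.ext h2 h3

lemma rest_card {r n k : ℕ} {p : Finset ℕ × Finset ℕ} (hk2 : 2*k ≤ n)
    (hp : p ∈ PairsB (r*n) (r*k)) :
    (Finset.Icc 1 (r*n) \ (p.1 ∪ p.2)).card = r * (n - 2*k) := by
  obtain ⟨⟨hS1sub, hS1card⟩, ⟨hS2sub, hS2card⟩, hdisj⟩ := mem_PairsB.1 hp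
  have h1 : (p.1 ∪ p.2).card = r*k + r*k := by
    rw [Finset.card_union_of_disjoint hdisj, hS1card, hS2card]
  rw [Finset.card_sdiff_of_subset (Finset.union_subset hS1sub hS2sub), h1, Nat.card_Icc]
  have : r * (n - 2*k) = r*n - 2*(r*k) := by rw [Nat.mul_sub]; ring_nf
  omega

lemma TT_card {r n k : ℕ} (hr : 1 ≤ r) (hk2 : 2*k ≤ n) :
    (TT r n k).card * ((Nat.factorial r ^ k * Nat.factorial k) *
      (Nat.factorial r ^ (n-2*k) * Nat.factorial (n-2*k))) =
    (PairsB (r*n) (r*k)).card *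
      (Nat.factorial (r*k) * Nat.factorial (r*(n-2*k))) := by
  have hdisj : ∀ p ∈ PairsB (r*n) (r*k), ∀ p' ∈ PairsB (r*n) (r*k), p ≠ p' →
      Disjoint (((Mch r p.1) ×ˢ (Mch r (Finset.Icc 1 (r*n) \ (p.1 ∪ p.2)))).image (GMap p))
        (((Mch r p'.1) ×ˢ (Mch r (Finset.Icc 1 (r*n) \ (p'.1 ∪ p'.2)))).image (GMap p')) := by
    intro p hp p' hp' hne
    rw [Finset.disjoint_left]
    intro T hT hT'
    obtain ⟨q, hq, rfl⟩ := Finset.mem_image.1 hT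
    obtain ⟨q', hq', heq⟩ := Finset.mem_image.1 hT'
    rw [Finset.mem_product] at hq hq'
    obtain ⟨_, hs1, hs2⟩ := GMap_mem hr hk2 hp hq.1 hq.2
    obtain ⟨_, hs1', hs2'⟩ := GMap_mem hr hk2 hp' hq'.1 hq'.2
    rw [heq] at hs1' hs2'
    exact hne (Prod.ext (hs1.symm.trans hs1') (hs2.symm.trans hs2'))
  rw [TT_decomp hr hk2, Finset.card_biUnion hdisj, Finset.sum_mul]
  have hterm : ∀ p ∈ PairsB (r*n) (r*k),
      (((Mch r p.1) ×ˢ (Mch r (Finset.Icc 1 (r*n) \ (p.1 ∪ p.2)))).image (GMap p)).card *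
      ((Nat.factorial r ^ k * Nat.factorial k) *
        (Nat.factorial r ^ (n-2*k) * Nat.factorial (n-2*k))) =
      Nat.factorial (r*k) * Nat.factorial (r*(n-2*k)) := by
    intro p hp
    rw [Finset.card_image_of_injOn (by
      rw [Finset.coe_product]; exact GMap_injOn hr hk2 hp), Finset.card_product]
    have h1 := card_Mch r hr k p.1 (mem_PairsB.1 hp).1.2
    have h2 := card_Mch r hr (n - 2*k) _ (rest_card hk2 hp)
    calc (Mch r p.1).card * (Mch r (Finset.Icc 1 (r*n) \ (p.1 ∪ p.2))).card *
          ((Nat.factorial r ^ k * Nat.factorial k) *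
            (Nat.factorial r ^ (n-2*k) * Nat.factorial (n-2*k)))
        = ((Mch r p.1).card * (Nat.factorial r ^ k * Nat.factorial k)) *
          ((Mch r (Finset.Icc 1 (r*n) \ (p.1 ∪ p.2))).card *
            (Nat.factorial r ^ (n-2*k) * Nat.factorial (n-2*k))) := by ring
      _ = Nat.factorial (r*k) * Nat.factorial (r*(n-2*k)) := by rw [h1, h2]
  rw [Finset.sum_congr rfl hterm, Finset.sum_const, smul_eq_mul]

lemma orderedMatching_iff {r n : ℕ} (hr : 1 ≤ r) {M : Finset (Finset ℕ)} :
    IsOrderedMatching r n M ↔ M ∈ Mch r (Finset.Icc 1 (r*n)) := by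
  rw [mem_Mch]
  constructor
  · rintro ⟨h1, h2, h3⟩
    exact ⟨h1, h3⟩
  · rintro ⟨h1, h2⟩
    refine ⟨h1, ?_, h2⟩
    have hIcc : (Finset.Icc 1 (r*n)).card = r * n := by rw [Nat.card_Icc]; omega
    exact card_eq_of_mem_Mch hr (mem_Mch.2 ⟨h1, h2⟩) hIcc

lemma choose_identity {r n k : ℕ} (hk2 : 2*k ≤ n) :
    (Nat.choose (r*n) (r*k) * Nat.choose (r*n - r*k) (r*k)) *
      (Nat.factorial (r*k) * Nat.factorial (r*k) * Nat.factorial (r*n - 2*r*k)) =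
    Nat.factorial (r*n) := by
  have hrw : 2*r*k = 2*(r*k) := by ring
  rw [hrw]
  have hmul2 : 2*(r*k) ≤ r*n := by
    calc 2*(r*k) = r*(2*k) := by ring
      _ ≤ r*n := Nat.mul_le_mul_left r hk2
  have h1 : r*k ≤ r*n := by omega
  have h2 : r*k ≤ r*n - r*k := by omega
  have c1 := Nat.choose_mul_factorial_mul_factorial h1
  have c2 := Nat.choose_mul_factorial_mul_factorial h2
  have hsub : r*n - r*k - (r*k) = r*n - 2*(r*k) := by omega
  rw [hsub] at c2
  calc (Nat.choose (r*n) (r*k) * Nat.choose (r*n - r*k) (r*k)) *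
        (Nat.factorial (r*k) * Nat.factorial (r*k) * Nat.factorial (r*n - 2*(r*k)))
      = (Nat.choose (r*n) (r*k) * Nat.factorial (r*k)) *
        (Nat.choose (r*n - r*k) (r*k) * Nat.factorial (r*k) *
          Nat.factorial (r*n - 2*(r*k))) := by ring
    _ = (Nat.choose (r*n) (r*k) * Nat.factorial (r*k)) * Nat.factorial (r*n - r*k) := by
        rw [c2]
    _ = Nat.factorial (r*n) := c1

/-- first-moment computation. For `r ≥ 2`, `n ≥ 1` and
`1 ≤ k ≤ n/2`, the number of pairs `(M, {M₁, M₂})` of an ordered `r`-matching of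
size `n` with an unordered pair of vertex-disjoint isomorphic sub-matchings of
size `k` equals `(1/2)·(rn)!/((rk)!·(rk)!·(rn-2rk)!)·α_k·α_{n-2k}`, where
`α_m = (rm)!/((r!)^m·m!)`. Equivalently, the expected number of twins of size
`k` in a uniformly random ordered `r`-matching of size `n` equals
`(1/2)·(n!/(n-2k)!)·(1/k!)·(r!)^k/(rk)!`. Below the count is over *ordered*
triples `(M, M₁, M₂)` (with `M₁ ≠ M₂`, as they are vertex-disjoint and
nonempty), which is exactly twice the number of pairs `(M, {M₁, M₂})`, so both
stated formulas appear with the factor `1/2` cancelled against the factor `2`. -/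
theorem expected_number_of_twins (r n k : ℕ) (hr : 2 ≤ r) (hn : 1 ≤ n)
    (hk₁ : 1 ≤ k) (hk₂ : 2 * k ≤ n) :
    (Nat.card {T : Finset (Finset ℕ) × Finset (Finset ℕ) × Finset (Finset ℕ) |
        IsOrderedMatching r n T.1 ∧ T.2.1 ⊆ T.1 ∧ T.2.2 ⊆ T.1 ∧
        Disjoint (mSupport T.2.1) (mSupport T.2.2) ∧ MatchIso T.2.1 T.2.2 ∧
        T.2.1.card = k ∧ T.2.2.card = k} : ℝ) =
      (Nat.factorial (r * n) : ℝ) /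
          ((Nat.factorial (r * k) : ℝ) * (Nat.factorial (r * k) : ℝ) *
            (Nat.factorial (r * n - 2 * r * k) : ℝ)) *
        ((Nat.factorial (r * k) : ℝ) /
          ((Nat.factorial r : ℝ) ^ k * (Nat.factorial k : ℝ))) *
        ((Nat.factorial (r * (n - 2 * k)) : ℝ) /
          ((Nat.factorial r : ℝ) ^ (n - 2 * k) * (Nat.factorial (n - 2 * k) : ℝ))) ∧
    (Nat.card {T : Finset (Finset ℕ) × Finset (Finset ℕ) × Finset (Finset ℕ) |
        IsOrderedMatching r n T.1 ∧ T.2.1 ⊆ T.1 ∧ T.2.2 ⊆ T.1 ∧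
        Disjoint (mSupport T.2.1) (mSupport T.2.2) ∧ MatchIso T.2.1 T.2.2 ∧
        T.2.1.card = k ∧ T.2.2.card = k} : ℝ) /
      (Nat.card {M : Finset (Finset ℕ) | IsOrderedMatching r n M} : ℝ) =
      ((Nat.factorial n : ℝ) / (Nat.factorial (n - 2 * k) : ℝ)) *
        (1 / (Nat.factorial k : ℝ)) *
        ((Nat.factorial r : ℝ) ^ k / (Nat.factorial (r * k) : ℝ)) := by
  have hr1 : 1 ≤ r := by omega
  -- identify the sets with finsets
  have hsetT : {T : Finset (Finset ℕ) × Finset (Finset ℕ) × Finset (Finset ℕ) |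
      IsOrderedMatching r n T.1 ∧ T.2.1 ⊆ T.1 ∧ T.2.2 ⊆ T.1 ∧
      Disjoint (mSupport T.2.1) (mSupport T.2.2) ∧ MatchIso T.2.1 T.2.2 ∧
      T.2.1.card = k ∧ T.2.2.card = k} = ↑(TT r n k) := by
    ext T
    rw [Finset.mem_coe, mem_TT]
    exact Iff.rfl
  have hsetM : {M : Finset (Finset ℕ) | IsOrderedMatching r n M} =
      ↑(Mch r (Finset.Icc 1 (r*n))) := by
    ext M
    rw [Finset.mem_coe]
    exact orderedMatching_iff hr1
  have hcardT : Nat.card {T : Finset (Finset ℕ) × Finset (Finset ℕ) × Finset (Finset ℕ) |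
      IsOrderedMatching r n T.1 ∧ T.2.1 ⊆ T.1 ∧ T.2.2 ⊆ T.1 ∧
      Disjoint (mSupport T.2.1) (mSupport T.2.2) ∧ MatchIso T.2.1 T.2.2 ∧
      T.2.1.card = k ∧ T.2.2.card = k} = (TT r n k).card := by
    rw [hsetT, Nat.card_coe_set_eq, Set.ncard_coe_finset]
  have hcardM : Nat.card {M : Finset (Finset ℕ) | IsOrderedMatching r n M} =
      (Mch r (Finset.Icc 1 (r*n))).card := by
    rw [hsetM, Nat.card_coe_set_eq, Set.ncard_coe_finset]
  -- arithmetic in ℕ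
  have hbb : r*n - 2*r*k = r*(n - 2*k) := by
    have h1 : r*(n - 2*k) = r*n - r*(2*k) := Nat.mul_sub r n (2*k)
    have h2 : r*(2*k) = 2*r*k := by ring
    have h3 : 2*r*k = 2*(r*k) := by ring
    have h4 : 2*(r*k) ≤ r*n := by
      calc 2*(r*k) = r*(2*k) := by ring
        _ ≤ r*n := Nat.mul_le_mul_left r hk₂
    omega
  have hIcc : (Finset.Icc 1 (r*n)).card = r*n := by rw [Nat.card_Icc]; omega
  have hA := TT_card (r := r) (n := n) (k := k) hr1 hk₂
  have hBc := card_PairsB (N := r*n) (c := r*k) (Nat.mul_le_mul_left r (by omega))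
  have hC := card_Mch r hr1 n _ hIcc
  have h3 := choose_identity (r := r) (n := n) (k := k) hk₂
  rw [hBc] at hA
  rw [hbb] at h3
  -- nonzero facts in ℝ
  have f0 : ∀ m : ℕ, ((Nat.factorial m : ℝ)) ≠ 0 :=
    fun m => Nat.cast_ne_zero.mpr (Nat.factorial_pos m).ne'
  have p0 : ∀ m : ℕ, ((Nat.factorial r : ℝ))^m ≠ 0 := fun m => pow_ne_zero m (f0 r)
  -- real versions
  have hAR : ((TT r n k).card : ℝ) =
      ((Nat.choose (r*n) (r*k) : ℝ) * (Nat.choose (r*n - r*k) (r*k) : ℝ)) *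
        ((Nat.factorial (r*k) : ℝ) * (Nat.factorial (r*(n-2*k)) : ℝ)) /
        (((Nat.factorial r : ℝ)^k * (Nat.factorial k : ℝ)) *
          ((Nat.factorial r : ℝ)^(n-2*k) * (Nat.factorial (n-2*k) : ℝ))) := by
    rw [eq_div_iff (by positivity)]
    exact_mod_cast hA
  have hchR : ((Nat.choose (r*n) (r*k) : ℝ) * (Nat.choose (r*n - r*k) (r*k) : ℝ)) =
      (Nat.factorial (r*n) : ℝ) /
        ((Nat.factorial (r*k) : ℝ) * (Nat.factorial (r*k) : ℝ) *
          (Nat.factorial (r*(n-2*k)) : ℝ)) := by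
    rw [eq_div_iff (by positivity)]
    exact_mod_cast h3
  have hpow : (Nat.factorial r)^n =
      (Nat.factorial r)^k * ((Nat.factorial r)^k * (Nat.factorial r)^(n-2*k)) := by
    rw [← pow_add, ← pow_add]; congr 1; omega
  rw [hpow] at hC
  have hCR : ((Mch r (Finset.Icc 1 (r*n))).card : ℝ) =
      (Nat.factorial (r*n) : ℝ) /
        (((Nat.factorial r : ℝ)^k * ((Nat.factorial r : ℝ)^k *
          (Nat.factorial r : ℝ)^(n-2*k))) * (Nat.factorial n : ℝ)) := by
    rw [eq_div_iff (by positivity)]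
    exact_mod_cast hC
  constructor
  · rw [hcardT, hAR, hchR, hbb]
    field_simp
  · rw [hcardT, hcardM, hAR, hchR, hCR]
    have e1 := f0 (r*n)
    have e2 := f0 (r*k)
    have e3 := f0 (r*(n-2*k))
    have e4 := f0 k
    have e5 := f0 (n-2*k)
    have e6 := f0 n
    have e7 := p0 k
    have e8 := p0 (n-2*k)
    field_simp
end
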